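/- For the fractional knapsack value O(T, b), and any item x ∉ T, the marginal gain O(T ∪ {x}, b) − O(T, b) is non-decreasing as a function of the budget b ≥ 0. -/

import Mathlib

/-- The fractional knapsack value `O(T, b)`. -/
noncomputable def knap {U : Type*} (T : Finset U) (p w : U → ℝ) (b : ℝ) : ℝ :=
  sSup {v | ∃ q : U → ℝ, (∀ u, q u ∈ Set.Icc (0 : ℝ) 1) ∧
    (∑ u ∈ T, p u * q u) ≤ b ∧ v = ∑ u ∈ T, p u * q u * w u}

namespace KnapAux

variable {U : Type*}

/-- The feasible value set. -/
def KS (T : Finset U) (p w : U → ℝ) (b : ℝ) : Set ℝ :=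
  {v | ∃ q : U → ℝ, (∀ u, q u ∈ Set.Icc (0 : ℝ) 1) ∧
    (∑ u ∈ T, p u * q u) ≤ b ∧ v = ∑ u ∈ T, p u * q u * w u}

lemma knap_eq (T : Finset U) (p w : U → ℝ) (b : ℝ) :
    knap T p w b = sSup (KS T p w b) := rfl

lemma KS_nonempty (T : Finset U) (p w : U → ℝ) {b : ℝ} (hb : 0 ≤ b) :
    (KS T p w b).Nonempty := by
  refine ⟨0, fun _ => 0, fun u => ⟨le_rfl, zero_le_one⟩, ?_, ?_⟩ <;> simp [hb]

lemma KS_bdd (T : Finset U) (p w : U → ℝ) (b : ℝ)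
    (hp : ∀ u, p u ∈ Set.Ioc (0 : ℝ) 1) (hw : ∀ u, 0 ≤ w u) :
    BddAbove (KS T p w b) := by
  refine ⟨∑ u ∈ T, p u * w u, ?_⟩
  rintro v ⟨q, hq, -, rfl⟩
  apply Finset.sum_le_sum
  intro u _
  have h1 := (hp u).1
  have h2 := (hq u).1
  have h3 := (hq u).2
  have h4 := hw u
  nlinarith [mul_nonneg (mul_nonneg h1.le h4) (sub_nonneg.mpr h3)]

lemma KS_combo (T : Finset U) (p w : U → ℝ) {b1 b2 l m : ℝ}
    (hl : 0 ≤ l) (hm : 0 ≤ m) (hlm : l + m = 1)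
    {v1 v2 : ℝ} (h1 : v1 ∈ KS T p w b1) (h2 : v2 ∈ KS T p w b2) :
    l * v1 + m * v2 ∈ KS T p w (l * b1 + m * b2) := by
  obtain ⟨q1, hq1, hbud1, rfl⟩ := h1
  obtain ⟨q2, hq2, hbud2, rfl⟩ := h2
  refine ⟨fun u => l * q1 u + m * q2 u, ?_, ?_, ?_⟩
  · intro u
    constructor
    · exact add_nonneg (mul_nonneg hl (hq1 u).1) (mul_nonneg hm (hq2 u).1)
    · calc l * q1 u + m * q2 u ≤ l * 1 + m * 1 :=
            add_le_add (mul_le_mul_of_nonneg_left (hq1 u).2 hl)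
              (mul_le_mul_of_nonneg_left (hq2 u).2 hm)
        _ = 1 := by rw [mul_one, mul_one, hlm]
  · have heq : (∑ u ∈ T, p u * (l * q1 u + m * q2 u)) =
        l * (∑ u ∈ T, p u * q1 u) + m * (∑ u ∈ T, p u * q2 u) := by
      rw [Finset.mul_sum, Finset.mul_sum, ← Finset.sum_add_distrib]
      exact Finset.sum_congr rfl fun u _ => by ring
    rw [heq]
    exact add_le_add (mul_le_mul_of_nonneg_left hbud1 hl)
      (mul_le_mul_of_nonneg_left hbud2 hm)
  · rw [Finset.mul_sum, Finset.mul_sum, ← Finset.sum_add_distrib]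
    exact Finset.sum_congr rfl fun u _ => by ring

/-- Concavity in four-point form. -/
lemma four_point (T : Finset U) (p w : U → ℝ)
    (hp : ∀ u, p u ∈ Set.Ioc (0 : ℝ) 1) (hw : ∀ u, 0 ≤ w u)
    {y b c : ℝ} (hy : 0 ≤ y) (hyb : y ≤ b) (hbc : b ≤ c) :
    knap T p w (b - y) + knap T p w c ≤ knap T p w b + knap T p w (c - y) := by
  rcases eq_or_lt_of_le hy with rfl | hy'
  · simp
  have hb0 : 0 ≤ b := le_trans hy hyb
  have hc0 : 0 ≤ c := le_trans hb0 hbc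
  have hden : 0 < c - b + y := by linarith
  set l : ℝ := (c - b) / (c - b + y) with hl_def
  set m : ℝ := y / (c - b + y) with hm_def
  have hl : 0 ≤ l := div_nonneg (by linarith) hden.le
  have hm : 0 ≤ m := div_nonneg hy hden.le
  have hlm : l + m = 1 := by
    rw [hl_def, hm_def, ← add_div, div_self hden.ne']
  have hb' : l * (b - y) + m * c = b := by
    rw [hl_def, hm_def]; field_simp; ring
  have hc' : m * (b - y) + l * c = c - y := by
    rw [hl_def, hm_def]; field_simp; ring
  have key : ∀ v1 ∈ KS T p w (b - y), ∀ v2 ∈ KS T p w c,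
      v1 + v2 ≤ knap T p w b + knap T p w (c - y) := by
    intro v1 h1 v2 h2
    have A : l * v1 + m * v2 ∈ KS T p w b := by
      rw [← hb']; exact KS_combo T p w hl hm hlm h1 h2
    have B : m * v1 + l * v2 ∈ KS T p w (c - y) := by
      rw [← hc']; exact KS_combo T p w hm hl (by linarith) h1 h2
    have A' : l * v1 + m * v2 ≤ knap T p w b :=
      le_csSup (KS_bdd T p w b hp hw) A
    have B' : m * v1 + l * v2 ≤ knap T p w (c - y) :=
      le_csSup (KS_bdd T p w (c - y) hp hw) B
    have e1 : l * v1 + m * v1 = v1 := by rw [← add_mul, hlm, one_mul]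
    have e2 : l * v2 + m * v2 = v2 := by rw [← add_mul, hlm, one_mul]
    linarith
  have h1 : knap T p w (b - y) ≤ knap T p w b + knap T p w (c - y) - knap T p w c := by
    rw [knap_eq]
    apply csSup_le (KS_nonempty T p w (by linarith : (0:ℝ) ≤ b - y))
    intro v1 hv1
    have : knap T p w c ≤ knap T p w b + knap T p w (c - y) - v1 := by
      rw [knap_eq]
      apply csSup_le (KS_nonempty T p w hc0)
      intro v2 hv2
      linarith [key v1 hv1 v2 hv2]
    linarith
  linarith

end KnapAux

/-- Lemma 1: for any item `x ∉ T`, the marginal gain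
`O(T ∪ {x}, b) − O(T, b)` is non-decreasing in the budget `b ≥ 0`. -/
theorem knap_marginal_gain_monotone {U : Type*} [DecidableEq U] (T : Finset U) (x : U)
    (hx : x ∉ T) (p w : U → ℝ)
    (hp : ∀ u, p u ∈ Set.Ioc (0 : ℝ) 1) (hw : ∀ u, 0 ≤ w u)
    (b c : ℝ) (hb : 0 ≤ b) (hbc : b ≤ c) :
    knap (insert x T) p w b - knap T p w b ≤ knap (insert x T) p w c - knap T p w c := by
  open KnapAux in
  have hc : 0 ≤ c := le_trans hb hbc
  rw [sub_le_sub_iff]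
  -- goal: knap (insert x T) p w b + knap T p w c ≤ knap (insert x T) p w c + knap T p w b
  have main : knap (insert x T) p w b ≤
      knap (insert x T) p w c + knap T p w b - knap T p w c := by
    rw [show knap (insert x T) p w b = sSup (KS (insert x T) p w b) from rfl]
    apply csSup_le (KS_nonempty (insert x T) p w hb)
    rintro v ⟨q, hq, hbud, rfl⟩
    set y : ℝ := p x * q x with hy_def
    have hy0 : 0 ≤ y := mul_nonneg (hp x).1.le (hq x).1
    have hsum_nonneg : 0 ≤ ∑ u ∈ T, p u * q u :=
      Finset.sum_nonneg fun u _ => mul_nonneg (hp u).1.le (hq u).1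
    have hbud' : y + ∑ u ∈ T, p u * q u ≤ b := by
      rwa [Finset.sum_insert hx] at hbud
    have hyb : y ≤ b := by linarith
    have hyc : y ≤ c := le_trans hyb hbc
    -- the restriction of q to T is feasible at budget b - y
    have hv' : (∑ u ∈ T, p u * q u * w u) ∈ KS T p w (b - y) :=
      ⟨q, hq, by linarith, rfl⟩
    have hv'le : (∑ u ∈ T, p u * q u * w u) ≤ knap T p w (b - y) :=
      le_csSup (KS_bdd T p w (b - y) hp hw) hv'
    -- y * w x + knap T p w (c - y) ≤ knap (insert x T) p w c
    have hstep : y * w x + knap T p w (c - y) ≤ knap (insert x T) p w c := by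
      have : knap T p w (c - y) ≤ knap (insert x T) p w c - y * w x := by
        rw [show knap T p w (c - y) = sSup (KS T p w (c - y)) from rfl]
        apply csSup_le (KS_nonempty T p w (by linarith : (0:ℝ) ≤ c - y))
        rintro v'' ⟨r, hr, hrbud, rfl⟩
        have hmem : y * w x + ∑ u ∈ T, p u * r u * w u ∈ KS (insert x T) p w c := by
          refine ⟨fun u => if u = x then q x else r u, ?_, ?_, ?_⟩
          · intro u
            by_cases h : u = x <;> simp [h, hq x, hr u]
          · beta_reduce
            rw [Finset.sum_insert hx, if_pos rfl]
            have : (∑ u ∈ T, p u * (if u = x then q x else r u)) =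
                ∑ u ∈ T, p u * r u :=
              Finset.sum_congr rfl fun u hu => by
                rw [if_neg (fun h : u = x => hx (h ▸ hu))]
            rw [this]
            linarith
          · beta_reduce
            rw [Finset.sum_insert hx, if_pos rfl]
            have : (∑ u ∈ T, p u * (if u = x then q x else r u) * w u) =
                ∑ u ∈ T, p u * r u * w u :=
              Finset.sum_congr rfl fun u hu => by
                rw [if_neg (fun h : u = x => hx (h ▸ hu))]
            rw [this, hy_def]
        have := le_csSup (KS_bdd (insert x T) p w c hp hw) hmem
        rw [← knap_eq] at this
        linarith
      linarith
    have hfour := four_point T p w hp hw hy0 hyb hbc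
    have hval : (∑ u ∈ insert x T, p u * q u * w u) =
        y * w x + ∑ u ∈ T, p u * q u * w u := by
      rw [Finset.sum_insert hx, hy_def]
    rw [hval]
    linarith
  linarith
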